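/- Let N ≥ 1 and let p_{ij}, d_{ij} : ℝ^N → ℝ (1 ≤ i,j ≤ N) be nonnegative, twice continuously differentiable functions with p_{ij}(z) = d_{ji}(z) and p_{ii}(z) = d_{ii}(z) = 0 for all z. Set P_i = Σ_j p_{ij}, D_i = Σ_j d_{ij}. Let y : [t_n, t_n + T] → ℝ^N solve y_i' = P_i(y) − D_i(y) with y(t_n) = yⁿ, all yⁿ_i > 0. Suppose Y2, Y : (0,T) → ℝ^N satisfy, for every Δt ∈ (0,T) and every i: Y2_i(Δt) > 0, Y2_i = yⁿ_i + Δt Σ_j ( p_{ij}(yⁿ)·Y2_j/yⁿ_j − d_{ij}(yⁿ)·Y2_i/yⁿ_i ), and Y_i = yⁿ_i + (Δt/2) Σ_j ( (p_{ij}(yⁿ) + p_{ij}(Y2))·Y_j/Y2_j − (d_{ij}(yⁿ) + d_{ij}(Y2))·Y_i/Y2_i ). Then Y_i(Δt) = y_i(t_n + Δt) + O(Δt³) as Δt → 0⁺ for every i. (The original modified Patankar–Runge–Kutta scheme of Burchard, Deleersnijder and Meister, i.e. the two-stage MPRK scheme with a21 = 1, b1 = b2 = 1/2, π_i = yⁿ_i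 and σ_i = y^{(2)}_i, is second order accurate.) -/

import Mathlib

open Set
lemma abs_sub_le' (a b : ℝ) : |a - b| ≤ |a| + |b| := by
  calc |a - b| ≤ |a| + |(-b)| := by rw [sub_eq_add_neg]; exact abs_add_le _ _
    _ = |a| + |b| := by rw [abs_neg]

lemma abs_mul_div_le {a b c A B mc : ℝ} (hA : |a| ≤ A) (hB : |b| ≤ B)
    (hc : 0 < mc) (hmc : mc ≤ c) : |a * b / c| ≤ A * B / mc := by
  have hc0 : 0 < c := lt_of_lt_of_le hc hmc
  rw [abs_div, abs_mul, abs_of_pos hc0]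
  have hA0 : 0 ≤ A := (abs_nonneg a).trans hA
  have hB0 : 0 ≤ B := (abs_nonneg b).trans hB
  have hab : |a| * |b| ≤ A * B := mul_le_mul hA hB (abs_nonneg b) hA0
  calc |a| * |b| / c ≤ A * B / c := by gcongr
    _ ≤ A * B / mc := by gcongr


lemma mvt0 {E : Type*} [NormedAddCommGroup E] [NormedSpace ℝ E]
    {g : ℝ → E} {g' : ℝ → E} {c C t : ℝ}
    (hg : ∀ x ∈ Icc (0:ℝ) c, HasDerivWithinAt g (g' x) (Icc 0 c) x)
    (hbd : ∀ x ∈ Icc (0:ℝ) c, ‖g' x‖ ≤ C) (ht : t ∈ Icc (0:ℝ) c) :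
    ‖g t - g 0‖ ≤ C * t := by
  have h0 : (0:ℝ) ∈ Icc (0:ℝ) c := ⟨le_refl _, ht.1.trans ht.2⟩
  have := Convex.norm_image_sub_le_of_norm_hasDerivWithin_le hg hbd (convex_Icc 0 c) h0 ht
  simpa [Real.norm_eq_abs, abs_of_nonneg ht.1] using this

lemma taylor1_bound {g g' : ℝ → ℝ} {c L : ℝ} (hLnn : 0 ≤ L)
    (hg : ∀ x ∈ Icc (0:ℝ) c, HasDerivWithinAt g (g' x) (Icc 0 c) x)
    (hL : ∀ x ∈ Icc (0:ℝ) c, |g' x - g' 0| ≤ L * x) :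
    ∀ t ∈ Icc (0:ℝ) c, |g t - g 0 - t * g' 0| ≤ L * t ^ 2 := by
  intro t ht
  have hsub : Icc (0:ℝ) t ⊆ Icc 0 c := Icc_subset_Icc le_rfl ht.2
  set E : ℝ → ℝ := fun x => g x - (g 0 + x * g' 0) with hE
  have hE' : ∀ x ∈ Icc (0:ℝ) t, HasDerivWithinAt E (g' x - g' 0) (Icc 0 t) x := by
    intro x hx
    have h1 : HasDerivWithinAt g (g' x) (Icc 0 t) x := (hg x (hsub hx)).mono hsub
    have h2 : HasDerivWithinAt (fun x : ℝ => g 0 + x * g' 0) (g' 0) (Icc 0 t) x := by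
      simpa using ((hasDerivWithinAt_id x (Icc (0:ℝ) t)).mul_const (g' 0)).const_add (g 0)
    exact h1.sub h2
  have hbd : ∀ x ∈ Icc (0:ℝ) t, ‖g' x - g' 0‖ ≤ L * t := by
    intro x hx
    rw [Real.norm_eq_abs]
    refine (hL x (hsub hx)).trans ?_
    nlinarith [hx.1, hx.2]
  have key := mvt0 hE' hbd (⟨ht.1, le_rfl⟩ : t ∈ Icc (0:ℝ) t)
  rw [Real.norm_eq_abs] at key
  have harg : g t - g 0 - t * g' 0 = E t - E 0 := by simp only [hE]; ring
  rw [harg]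
  calc |E t - E 0| ≤ L * t * t := key
    _ = L * t ^ 2 := by ring

lemma taylor2_bound {g g' g'' : ℝ → ℝ} {c M : ℝ}
    (hg : ∀ x ∈ Icc (0:ℝ) c, HasDerivWithinAt g (g' x) (Icc 0 c) x)
    (hg' : ∀ x ∈ Icc (0:ℝ) c, HasDerivWithinAt g' (g'' x) (Icc 0 c) x)
    (hM : ∀ x ∈ Icc (0:ℝ) c, |g'' x - g'' 0| ≤ M * x)
    (hMnn : 0 ≤ M) :
    ∀ t ∈ Icc (0:ℝ) c, |g t - g 0 - t * g' 0 - t ^ 2 / 2 * g'' 0| ≤ M * t ^ 3 := by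
  have ht1 := taylor1_bound hMnn hg' hM
  intro t ht
  have hsub : Icc (0:ℝ) t ⊆ Icc 0 c := Icc_subset_Icc le_rfl ht.2
  set E : ℝ → ℝ := fun x => g x - (g 0 + x * g' 0 + x ^ 2 * (g'' 0 / 2)) with hE
  have hE' : ∀ x ∈ Icc (0:ℝ) t, HasDerivWithinAt E (g' x - (g' 0 + x * g'' 0)) (Icc 0 t) x := by
    intro x hx
    have h1 : HasDerivWithinAt g (g' x) (Icc 0 t) x := (hg x (hsub hx)).mono hsub
    have h2 : HasDerivWithinAt (fun x : ℝ => g 0 + x * g' 0 + x ^ 2 * (g'' 0 / 2))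
        (g' 0 + x * g'' 0) (Icc 0 t) x := by
      have hpow : HasDerivWithinAt (fun x : ℝ => x ^ 2) (2 * x) (Icc 0 t) x := by
        simpa using (hasDerivAt_pow 2 x).hasDerivWithinAt (s := Icc 0 t)
      have := (((hasDerivWithinAt_id x (Icc (0:ℝ) t)).mul_const (g' 0)).const_add (g 0)).add
        (hpow.mul_const (g'' 0 / 2))
      exact this.congr_deriv (by ring)
    exact h1.sub h2
  have hbd : ∀ x ∈ Icc (0:ℝ) t, ‖g' x - (g' 0 + x * g'' 0)‖ ≤ M * t ^ 2 := by
    intro x hx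
    rw [Real.norm_eq_abs]
    have h2 : |g' x - g' 0 - x * g'' 0| ≤ M * x ^ 2 := ht1 x (hsub hx)
    have hx2 : x ^ 2 ≤ t ^ 2 := by nlinarith [hx.1, hx.2]
    have h3 : M * x ^ 2 ≤ M * t ^ 2 := mul_le_mul_of_nonneg_left hx2 hMnn
    calc |g' x - (g' 0 + x * g'' 0)| = |g' x - g' 0 - x * g'' 0| := by ring_nf
      _ ≤ M * x ^ 2 := h2
      _ ≤ M * t ^ 2 := h3
  have key := mvt0 hE' hbd (⟨ht.1, le_rfl⟩ : t ∈ Icc (0:ℝ) t)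
  rw [Real.norm_eq_abs] at key
  have harg : g t - g 0 - t * g' 0 - t ^ 2 / 2 * g'' 0 = E t - E 0 := by simp only [hE]; ring
  rw [harg]
  calc |E t - E 0| ≤ M * t ^ 2 * t := key
    _ = M * t ^ 3 := by ring

lemma lip_of_contDiff {E F : Type*} [NormedAddCommGroup E] [NormedSpace ℝ E]
    [NormedAddCommGroup F] [NormedSpace ℝ F]
    {g : E → F} (hg : ContDiff ℝ 1 g) {s : Set E} (hs : Convex ℝ s) (hc : IsCompact s) :
    ∃ L, 0 ≤ L ∧ ∀ z ∈ s, ∀ w ∈ s, ‖g z - g w‖ ≤ L * ‖z - w‖ := by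
  obtain ⟨C, hC⟩ := hc.exists_bound_of_continuousOn (hg.continuous_fderiv one_ne_zero).continuousOn
  refine ⟨max C 0, le_max_right _ _, fun z hz w hw => ?_⟩
  exact Convex.norm_image_sub_le_of_norm_fderiv_le
    (fun x _ => (hg.differentiable one_ne_zero).differentiableAt)
    (fun x hx => (hC x hx).trans (le_max_left _ _)) hs hw hz


/-- `f(Δt) = O(Δt^m)` as `Δt → 0⁺`. -/
def BigOAtZero (f : ℝ → ℝ) (m : ℕ) : Prop :=
  ∃ C > 0, ∃ δ > 0, ∀ t : ℝ, 0 < t → t < δ → |f t| ≤ C * t ^ m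

set_option maxHeartbeats 2000000 in
theorem stmt_17 (N : ℕ) (hN : 1 ≤ N)
    (p d : Fin N → Fin N → (Fin N → ℝ) → ℝ)
    (hpnn : ∀ i j z, 0 ≤ p i j z) (hdnn : ∀ i j z, 0 ≤ d i j z)
    (hpC2 : ∀ i j, ContDiff ℝ 2 (p i j)) (hdC2 : ∀ i j, ContDiff ℝ 2 (d i j))
    (hcons : ∀ i j z, p i j z = d j i z)
    (hpdiag : ∀ i z, p i i z = 0) (hddiag : ∀ i z, d i i z = 0)
    (P D : Fin N → (Fin N → ℝ) → ℝ)
    (hP : ∀ i z, P i z = ∑ j, p i j z) (hD : ∀ i z, D i z = ∑ j, d i j z)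
    (tn T : ℝ) (hT : 0 < T)
    (y : ℝ → Fin N → ℝ)
    (hy : ∀ (i : Fin N), ∀ t ∈ Set.Icc tn (tn + T),
      HasDerivWithinAt (fun s => y s i) (P i (y t) - D i (y t)) (Set.Icc tn (tn + T)) t)
    (yn : Fin N → ℝ) (hyn : y tn = yn) (hynpos : ∀ i, 0 < yn i)
    (Y2 Y : ℝ → Fin N → ℝ)
    (hY2pos : ∀ Δt, 0 < Δt → Δt < T → ∀ i, 0 < Y2 Δt i)
    (hY2 : ∀ Δt, 0 < Δt → Δt < T → ∀ i,
      Y2 Δt i = yn i + Δt * ∑ j,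
        (p i j yn * Y2 Δt j / yn j - d i j yn * Y2 Δt i / yn i))
    (hY : ∀ Δt, 0 < Δt → Δt < T → ∀ i,
      Y Δt i = yn i + Δt / 2 * ∑ j,
        ((p i j yn + p i j (Y2 Δt)) * Y Δt j / Y2 Δt j
          - (d i j yn + d i j (Y2 Δt)) * Y Δt i / Y2 Δt i)) :
    ∀ i, BigOAtZero (fun Δt => Y Δt i - y (tn + Δt) i) 3 := by
  classical
  have hNE : Nonempty (Fin N) := ⟨⟨0, hN⟩⟩
  set f : Fin N → (Fin N → ℝ) → ℝ := fun i z => ∑ j, (p i j z - d i j z) with hf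
  set fv : (Fin N → ℝ) → (Fin N → ℝ) := fun z i => f i z with hfv
  have hfC2 : ∀ i, ContDiff ℝ 2 (f i) := fun i =>
    ContDiff.sum fun j _ => (hpC2 i j).sub (hdC2 i j)
  have hy' : ∀ (i : Fin N), ∀ t ∈ Icc tn (tn + T),
      HasDerivWithinAt (fun s => y s i) (f i (y t)) (Icc tn (tn + T)) t := by
    intro i t ht
    have h := hy i t ht
    have : P i (y t) - D i (y t) = f i (y t) := by
      rw [hP, hD]; exact (Finset.sum_sub_distrib _ _).symm
    rwa [this] at h
  have hfvC2 : ContDiff ℝ 2 fv := contDiff_pi.mpr fun i => hfC2 i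
  -- min of yn
  obtain ⟨im, -, him⟩ := Finset.exists_min_image Finset.univ yn Finset.univ_nonempty
  set m := yn im with hmdef
  have hm : 0 < m := hynpos im
  have hmle : ∀ i, m ≤ yn i := fun i => him i (Finset.mem_univ i)
  set Sn := ‖yn‖ with hSndef
  have hSn : ∀ i, |yn i| ≤ Sn := fun i => norm_le_pi_norm yn i
  have hSnpos : 0 < Sn := lt_of_lt_of_le (hynpos im) ((le_abs_self _).trans (hSn im))
  -- continuity and bound of y on the interval
  have hIcc : tn ≤ tn + T := by linarith
  have hycont : ContinuousOn y (Icc tn (tn + T)) := by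
    intro t ht
    exact continuousWithinAt_pi.mpr fun i => (hy i t ht).continuousWithinAt
  obtain ⟨Cy0, hCy0⟩ := (isCompact_Icc).exists_bound_of_continuousOn hycont
  set Cy := max Cy0 0 with hCydef
  set R := 3 * Sn + Cy + ‖fv yn‖ + 2 with hRdef
  have hRpos : 0 < R := by positivity
  set K := Metric.closedBall (0 : Fin N → ℝ) R with hKdef
  have hKmem : ∀ z : Fin N → ℝ, ‖z‖ ≤ R → z ∈ K := fun z hz => mem_closedBall_zero_iff.mpr hz
  have hKconv : Convex ℝ K := convex_closedBall _ _
  have hKcomp : IsCompact K := isCompact_closedBall _ _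
  have hCynn : 0 ≤ Cy := by rw [hCydef]; exact le_max_right _ _
  have hCyb : ∀ t ∈ Icc (0:ℝ) T, ‖y (tn + t)‖ ≤ Cy := by
    intro t ht
    have h1 : ‖y (tn + t)‖ ≤ Cy0 := hCy0 _ ⟨by linarith [ht.1], by linarith [ht.2]⟩
    rw [hCydef]; exact h1.trans (le_max_left _ _)
  have hynK : yn ∈ K := hKmem _ (by
    rw [hRdef, ← hSndef]; nlinarith [norm_nonneg (fv yn)])
  have huK : ∀ t ∈ Icc (0:ℝ) T, y (tn + t) ∈ K := by
    intro t ht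
    refine hKmem _ ?_
    rw [hRdef]
    nlinarith [norm_nonneg (fv yn), hCyb t ht]
  -- uniform bound M for p, d on K
  choose Mp hMp using fun i j => hKcomp.exists_bound_of_continuousOn (hpC2 i j).continuous.continuousOn
  choose Md hMd using fun i j => hKcomp.exists_bound_of_continuousOn (hdC2 i j).continuous.continuousOn
  set M := (∑ i, ∑ j, (max (Mp i j) 0 + max (Md i j) 0)) + 1 with hMdef
  have hMpos : 0 < M := by
    have : (0:ℝ) ≤ ∑ i, ∑ j, (max (Mp i j) 0 + max (Md i j) 0) :=
      Finset.sum_nonneg fun i _ => Finset.sum_nonneg fun j _ => by positivity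
    simp only [hMdef]; linarith
  have hMb : ∀ z ∈ K, ∀ i j, |p i j z| ≤ M ∧ |d i j z| ≤ M := by
    intro z hz i j
    have key : max (Mp i j) 0 + max (Md i j) 0 ≤ M - 1 := by
      simp only [hMdef, add_sub_cancel_right]
      have h1 : max (Mp i j) 0 + max (Md i j) 0 ≤
          ∑ j', (max (Mp i j') 0 + max (Md i j') 0) :=
        Finset.single_le_sum (f := fun j' => max (Mp i j') 0 + max (Md i j') 0)
          (fun j' _ => by positivity) (Finset.mem_univ j)
      have h2 : ∑ j', (max (Mp i j') 0 + max (Md i j') 0) ≤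
          ∑ i', ∑ j', (max (Mp i' j') 0 + max (Md i' j') 0) :=
        Finset.single_le_sum (f := fun i' => ∑ j', (max (Mp i' j') 0 + max (Md i' j') 0))
          (fun i' _ => Finset.sum_nonneg fun j' _ => by positivity) (Finset.mem_univ i)
      exact le_trans h1 h2
    constructor
    · have := hMp i j z hz
      have h := le_max_left (Mp i j) 0
      simp only [Real.norm_eq_abs] at this
      nlinarith [le_max_right (Md i j) 0, le_max_left (Md i j) 0]
    · have := hMd i j z hz
      simp only [Real.norm_eq_abs] at this
      nlinarith [le_max_right (Mp i j) 0, le_max_left (Md i j) 0, le_max_left (Md i j) 0]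
  -- Lipschitz constants on K
  have contdiff1 : ∀ (g : (Fin N → ℝ) → ℝ), ContDiff ℝ 2 g → ContDiff ℝ 1 g :=
    fun g hg => hg.of_le (by norm_num)
  choose Lp hLp0 hLp using fun i j => lip_of_contDiff (contdiff1 _ (hpC2 i j)) hKconv hKcomp
  choose Ld hLd0 hLd using fun i j => lip_of_contDiff (contdiff1 _ (hdC2 i j)) hKconv hKcomp
  set L := (∑ i, ∑ j, (Lp i j + Ld i j)) + 1 with hLdef
  have hLsum : ∀ i j, Lp i j + Ld i j ≤ L := by
    intro i j
    have h1 : Lp i j + Ld i j ≤ ∑ j', (Lp i j' + Ld i j') :=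
      Finset.single_le_sum (f := fun j' => Lp i j' + Ld i j')
        (fun j' _ => add_nonneg (hLp0 i j') (hLd0 i j')) (Finset.mem_univ j)
    have h2 : ∑ j', (Lp i j' + Ld i j') ≤ ∑ i', ∑ j', (Lp i' j' + Ld i' j') :=
      Finset.single_le_sum (f := fun i' => ∑ j', (Lp i' j' + Ld i' j'))
        (fun i' _ => Finset.sum_nonneg fun j' _ => add_nonneg (hLp0 i' j') (hLd0 i' j'))
        (Finset.mem_univ i)
    rw [hLdef]; linarith
  have hLpos : 0 < L := by
    rw [hLdef]
    have : (0:ℝ) ≤ ∑ i, ∑ j, (Lp i j + Ld i j) :=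
      Finset.sum_nonneg fun i _ => Finset.sum_nonneg fun j _ =>
        add_nonneg (hLp0 i j) (hLd0 i j)
    linarith
  have hpLip : ∀ i j, ∀ z ∈ K, ∀ w ∈ K, |p i j z - p i j w| ≤ L * ‖z - w‖ := by
    intro i j z hz w hw
    have := hLp i j z hz w hw
    rw [Real.norm_eq_abs] at this
    have h2 : Lp i j * ‖z - w‖ ≤ L * ‖z - w‖ :=
      mul_le_mul_of_nonneg_right (by linarith [hLsum i j, hLd0 i j]) (norm_nonneg _)
    linarith
  have hdLip : ∀ i j, ∀ z ∈ K, ∀ w ∈ K, |d i j z - d i j w| ≤ L * ‖z - w‖ := by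
    intro i j z hz w hw
    have := hLd i j z hz w hw
    rw [Real.norm_eq_abs] at this
    have h2 : Ld i j * ‖z - w‖ ≤ L * ‖z - w‖ :=
      mul_le_mul_of_nonneg_right (by linarith [hLsum i j, hLp0 i j]) (norm_nonneg _)
    linarith
  have hNpos : (0:ℝ) < N := by exact_mod_cast Nat.pos_of_ne_zero (by omega)
  -- ===== Phase A: a priori bound on Y2 =====
  set δ1 := min T (m / (4 * N * M)) with hδ1def
  have hδ1pos : 0 < δ1 := lt_min hT (by positivity)
  have hδ1T : δ1 ≤ T := min_le_left _ _
  have hY2b : ∀ Δt, 0 < Δt → Δt < δ1 → ∀ j, |Y2 Δt j| ≤ 2 * Sn := by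
    intro Δt h0 h1
    have hΔT : Δt < T := lt_of_lt_of_le h1 hδ1T
    obtain ⟨i₀, -, hmax⟩ := Finset.exists_max_image Finset.univ
      (fun j => |Y2 Δt j|) Finset.univ_nonempty
    set μ := |Y2 Δt i₀| with hμdef
    have hμ : ∀ j, |Y2 Δt j| ≤ μ := fun j => hmax j (Finset.mem_univ j)
    have hμnn : 0 ≤ μ := abs_nonneg _
    have heq := hY2 Δt h0 hΔT i₀
    have hsum : |∑ j, (p i₀ j yn * Y2 Δt j / yn j - d i₀ j yn * Y2 Δt i₀ / yn i₀)|
        ≤ N * (2 * M * μ / m) := by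
      refine (Finset.abs_sum_le_sum_abs _ _).trans ?_
      have hterm : ∀ j ∈ Finset.univ,
          |p i₀ j yn * Y2 Δt j / yn j - d i₀ j yn * Y2 Δt i₀ / yn i₀|
          ≤ 2 * M * μ / m := by
        intro j _
        have t1 : |p i₀ j yn * Y2 Δt j / yn j| ≤ M * μ / m :=
          abs_mul_div_le (hMb yn hynK i₀ j).1 (hμ j) hm (hmle j)
        have t2 : |d i₀ j yn * Y2 Δt i₀ / yn i₀| ≤ M * μ / m :=
          abs_mul_div_le (hMb yn hynK i₀ j).2 (hμ i₀) hm (hmle i₀)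
        calc |p i₀ j yn * Y2 Δt j / yn j - d i₀ j yn * Y2 Δt i₀ / yn i₀|
            ≤ |p i₀ j yn * Y2 Δt j / yn j| + |d i₀ j yn * Y2 Δt i₀ / yn i₀| :=
              abs_sub_le' _ _
          _ ≤ M * μ / m + M * μ / m := add_le_add t1 t2
          _ = 2 * M * μ / m := by ring
      calc ∑ j, |p i₀ j yn * Y2 Δt j / yn j - d i₀ j yn * Y2 Δt i₀ / yn i₀|
          ≤ ∑ _j : Fin N, (2 * M * μ / m) := Finset.sum_le_sum hterm
        _ = N * (2 * M * μ / m) := by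
            rw [Finset.sum_const, Finset.card_univ, Fintype.card_fin, nsmul_eq_mul]
    have hfrac : Δt * (N * (2 * M * μ / m)) ≤ μ / 2 := by
      have hΔ : Δt ≤ m / (4 * N * M) := le_of_lt (lt_of_lt_of_le h1 (min_le_right _ _))
      have h2 : Δt * (2 * N * M) ≤ m / 2 := by
        calc Δt * (2 * N * M) ≤ m / (4 * N * M) * (2 * N * M) :=
              mul_le_mul_of_nonneg_right hΔ (by positivity)
          _ = m / 2 := by field_simp; ring
      have h3 : Δt * (N * (2 * M * μ / m)) = (Δt * (2 * N * M)) * (μ / m) := by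
        field_simp
      rw [h3]
      calc (Δt * (2 * N * M)) * (μ / m) ≤ (m / 2) * (μ / m) :=
            mul_le_mul_of_nonneg_right h2 (by positivity)
        _ = μ / 2 := by field_simp
    have hμb : μ ≤ Sn + μ / 2 := by
      have step : μ ≤ |yn i₀| + Δt * |∑ j, (p i₀ j yn * Y2 Δt j / yn j
          - d i₀ j yn * Y2 Δt i₀ / yn i₀)| := by
        have e1 : |Y2 Δt i₀| = |yn i₀ + Δt * ∑ j, (p i₀ j yn * Y2 Δt j / yn j
            - d i₀ j yn * Y2 Δt i₀ / yn i₀)| := by rw [← heq]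
        rw [hμdef, e1]
        refine (abs_add_le _ _).trans ?_
        rw [abs_mul, abs_of_pos h0]
      have h4 : Δt * |∑ j, (p i₀ j yn * Y2 Δt j / yn j - d i₀ j yn * Y2 Δt i₀ / yn i₀)|
          ≤ Δt * (N * (2 * M * μ / m)) := mul_le_mul_of_nonneg_left hsum h0.le
      linarith [hSn i₀]
    intro j
    linarith [hμ j]
  have hY2K : ∀ Δt, 0 < Δt → Δt < δ1 → Y2 Δt ∈ K := by
    intro Δt h0 h1
    refine hKmem _ ?_
    have hb : ‖Y2 Δt‖ ≤ 2 * Sn :=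
      (pi_norm_le_iff_of_nonneg (by positivity)).mpr (fun j => hY2b Δt h0 h1 j)
    rw [hRdef]; nlinarith [norm_nonneg (fv yn), hCynn]
  -- ===== Phase B: Y2 - yn = O(Δt) =====
  set C1 := N * (4 * M * Sn / m) with hC1def
  have hC1pos : 0 < C1 := by positivity
  have hY2lin : ∀ Δt, 0 < Δt → Δt < δ1 → ∀ i, |Y2 Δt i - yn i| ≤ C1 * Δt := by
    intro Δt h0 h1 i
    have hΔT : Δt < T := lt_of_lt_of_le h1 hδ1T
    have heq := hY2 Δt h0 hΔT i
    have hsum : |∑ j, (p i j yn * Y2 Δt j / yn j - d i j yn * Y2 Δt i / yn i)| ≤ C1 := by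
      refine (Finset.abs_sum_le_sum_abs _ _).trans ?_
      have hterm : ∀ j ∈ Finset.univ,
          |p i j yn * Y2 Δt j / yn j - d i j yn * Y2 Δt i / yn i|
          ≤ 4 * M * Sn / m := by
        intro j _
        have t1 : |p i j yn * Y2 Δt j / yn j| ≤ M * (2 * Sn) / m :=
          abs_mul_div_le (hMb yn hynK i j).1 (hY2b Δt h0 h1 j) hm (hmle j)
        have t2 : |d i j yn * Y2 Δt i / yn i| ≤ M * (2 * Sn) / m :=
          abs_mul_div_le (hMb yn hynK i j).2 (hY2b Δt h0 h1 i) hm (hmle i)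
        calc |p i j yn * Y2 Δt j / yn j - d i j yn * Y2 Δt i / yn i|
            ≤ |p i j yn * Y2 Δt j / yn j| + |d i j yn * Y2 Δt i / yn i| := abs_sub_le' _ _
          _ ≤ M * (2 * Sn) / m + M * (2 * Sn) / m := add_le_add t1 t2
          _ = 4 * M * Sn / m := by ring
      calc ∑ j, |p i j yn * Y2 Δt j / yn j - d i j yn * Y2 Δt i / yn i|
          ≤ ∑ _j : Fin N, (4 * M * Sn / m) := Finset.sum_le_sum hterm
        _ = C1 := by
            rw [Finset.sum_const, Finset.card_univ, Fintype.card_fin, nsmul_eq_mul, hC1def]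
    have : Y2 Δt i - yn i = Δt * ∑ j, (p i j yn * Y2 Δt j / yn j
        - d i j yn * Y2 Δt i / yn i) := by linarith [heq]
    rw [this, abs_mul, abs_of_pos h0]
    calc Δt * |∑ j, (p i j yn * Y2 Δt j / yn j - d i j yn * Y2 Δt i / yn i)|
        ≤ Δt * C1 := mul_le_mul_of_nonneg_left hsum h0.le
      _ = C1 * Δt := by ring
  -- ===== Phase C: lower bound on Y2 =====
  set δ2 := min δ1 (m / (2 * C1)) with hδ2def
  have hδ2pos : 0 < δ2 := lt_min hδ1pos (by positivity)
  have hδ2δ1 : δ2 ≤ δ1 := min_le_left _ _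
  have hY2low : ∀ Δt, 0 < Δt → Δt < δ2 → ∀ j, m / 2 ≤ Y2 Δt j := by
    intro Δt h0 h1 j
    have h2 : |Y2 Δt j - yn j| ≤ C1 * Δt := hY2lin Δt h0 (lt_of_lt_of_le h1 hδ2δ1) j
    have h3 : Δt ≤ m / (2 * C1) := le_of_lt (lt_of_lt_of_le h1 (min_le_right _ _))
    have h4 : C1 * Δt ≤ m / 2 := by
      calc C1 * Δt ≤ C1 * (m / (2 * C1)) := mul_le_mul_of_nonneg_left h3 hC1pos.le
        _ = m / 2 := by field_simp
    have h5 := abs_le.mp h2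
    have := hmle j
    linarith [h5.1]
  -- ===== Phase D: a priori bound on Y =====
  set δ3 := min δ2 (m / (8 * N * M)) with hδ3def
  have hδ3pos : 0 < δ3 := lt_min hδ2pos (by positivity)
  have hδ3δ2 : δ3 ≤ δ2 := min_le_left _ _
  have hδ3δ1 : δ3 ≤ δ1 := hδ3δ2.trans hδ2δ1
  have hm2 : 0 < m / 2 := by positivity
  have hpd2M : ∀ Δt, 0 < Δt → Δt < δ1 → ∀ i j,
      |p i j yn + p i j (Y2 Δt)| ≤ 2 * M ∧ |d i j yn + d i j (Y2 Δt)| ≤ 2 * M := by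
    intro Δt h0 h1 i j
    have h2 := hMb yn hynK i j
    have h3 := hMb (Y2 Δt) (hY2K Δt h0 h1) i j
    constructor
    · calc |p i j yn + p i j (Y2 Δt)| ≤ |p i j yn| + |p i j (Y2 Δt)| := abs_add_le _ _
        _ ≤ 2 * M := by linarith [h2.1, h3.1]
    · calc |d i j yn + d i j (Y2 Δt)| ≤ |d i j yn| + |d i j (Y2 Δt)| := abs_add_le _ _
        _ ≤ 2 * M := by linarith [h2.2, h3.2]
  have hYb : ∀ Δt, 0 < Δt → Δt < δ3 → ∀ j, |Y Δt j| ≤ 2 * Sn := by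
    intro Δt h0 h1
    have h1' : Δt < δ1 := lt_of_lt_of_le h1 hδ3δ1
    have h2' : Δt < δ2 := lt_of_lt_of_le h1 hδ3δ2
    have hΔT : Δt < T := lt_of_lt_of_le h1' hδ1T
    obtain ⟨i₀, -, hmax⟩ := Finset.exists_max_image Finset.univ
      (fun j => |Y Δt j|) Finset.univ_nonempty
    set μ := |Y Δt i₀| with hμdef
    have hμ : ∀ j, |Y Δt j| ≤ μ := fun j => hmax j (Finset.mem_univ j)
    have hμnn : 0 ≤ μ := abs_nonneg _
    have heq := hY Δt h0 hΔT i₀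
    have hsum : |∑ j, ((p i₀ j yn + p i₀ j (Y2 Δt)) * Y Δt j / Y2 Δt j
        - (d i₀ j yn + d i₀ j (Y2 Δt)) * Y Δt i₀ / Y2 Δt i₀)|
        ≤ N * (8 * M * μ / m) := by
      refine (Finset.abs_sum_le_sum_abs _ _).trans ?_
      have hterm : ∀ j ∈ Finset.univ,
          |(p i₀ j yn + p i₀ j (Y2 Δt)) * Y Δt j / Y2 Δt j
            - (d i₀ j yn + d i₀ j (Y2 Δt)) * Y Δt i₀ / Y2 Δt i₀|
          ≤ 8 * M * μ / m := by
        intro j _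
        have t1 : |(p i₀ j yn + p i₀ j (Y2 Δt)) * Y Δt j / Y2 Δt j|
            ≤ 2 * M * μ / (m / 2) :=
          abs_mul_div_le (hpd2M Δt h0 h1' i₀ j).1 (hμ j) hm2 (hY2low Δt h0 h2' j)
        have t2 : |(d i₀ j yn + d i₀ j (Y2 Δt)) * Y Δt i₀ / Y2 Δt i₀|
            ≤ 2 * M * μ / (m / 2) :=
          abs_mul_div_le (hpd2M Δt h0 h1' i₀ j).2 (hμ i₀) hm2 (hY2low Δt h0 h2' i₀)
        calc |(p i₀ j yn + p i₀ j (Y2 Δt)) * Y Δt j / Y2 Δt j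
            - (d i₀ j yn + d i₀ j (Y2 Δt)) * Y Δt i₀ / Y2 Δt i₀|
            ≤ |(p i₀ j yn + p i₀ j (Y2 Δt)) * Y Δt j / Y2 Δt j|
              + |(d i₀ j yn + d i₀ j (Y2 Δt)) * Y Δt i₀ / Y2 Δt i₀| := abs_sub_le' _ _
          _ ≤ 2 * M * μ / (m / 2) + 2 * M * μ / (m / 2) := add_le_add t1 t2
          _ = 8 * M * μ / m := by field_simp; ring
      calc ∑ j, |(p i₀ j yn + p i₀ j (Y2 Δt)) * Y Δt j / Y2 Δt j
            - (d i₀ j yn + d i₀ j (Y2 Δt)) * Y Δt i₀ / Y2 Δt i₀|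
          ≤ ∑ _j : Fin N, (8 * M * μ / m) := Finset.sum_le_sum hterm
        _ = N * (8 * M * μ / m) := by
            rw [Finset.sum_const, Finset.card_univ, Fintype.card_fin, nsmul_eq_mul]
    have hfrac : Δt / 2 * (N * (8 * M * μ / m)) ≤ μ / 2 := by
      have hΔ : Δt ≤ m / (8 * N * M) := le_of_lt (lt_of_lt_of_le h1 (min_le_right _ _))
      have h2 : Δt * (4 * N * M) ≤ m / 2 := by
        calc Δt * (4 * N * M) ≤ m / (8 * N * M) * (4 * N * M) :=
              mul_le_mul_of_nonneg_right hΔ (by positivity)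
          _ = m / 2 := by field_simp; ring
      have h3 : Δt / 2 * (N * (8 * M * μ / m)) = (Δt * (4 * N * M)) * (μ / m) := by
        field_simp; ring
      rw [h3]
      calc (Δt * (4 * N * M)) * (μ / m) ≤ (m / 2) * (μ / m) :=
            mul_le_mul_of_nonneg_right h2 (by positivity)
        _ = μ / 2 := by field_simp
    have hμb : μ ≤ Sn + μ / 2 := by
      have step : μ ≤ |yn i₀| + Δt / 2 * |∑ j, ((p i₀ j yn + p i₀ j (Y2 Δt)) * Y Δt j / Y2 Δt j
          - (d i₀ j yn + d i₀ j (Y2 Δt)) * Y Δt i₀ / Y2 Δt i₀)| := by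
        have e1 : |Y Δt i₀| = |yn i₀ + Δt / 2 * ∑ j, ((p i₀ j yn + p i₀ j (Y2 Δt)) * Y Δt j / Y2 Δt j
            - (d i₀ j yn + d i₀ j (Y2 Δt)) * Y Δt i₀ / Y2 Δt i₀)| := by rw [← heq]
        rw [hμdef, e1]
        refine (abs_add_le _ _).trans ?_
        rw [abs_mul, abs_of_pos (by positivity : (0:ℝ) < Δt / 2)]
      have h4 : Δt / 2 * |∑ j, ((p i₀ j yn + p i₀ j (Y2 Δt)) * Y Δt j / Y2 Δt j
          - (d i₀ j yn + d i₀ j (Y2 Δt)) * Y Δt i₀ / Y2 Δt i₀)|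
          ≤ Δt / 2 * (N * (8 * M * μ / m)) :=
        mul_le_mul_of_nonneg_left hsum (by positivity)
      linarith [hSn i₀]
    intro j
    linarith [hμ j]
  have hYK : ∀ Δt, 0 < Δt → Δt < δ3 → Y Δt ∈ K := by
    intro Δt h0 h1
    refine hKmem _ ?_
    have hb : ‖Y Δt‖ ≤ 2 * Sn :=
      (pi_norm_le_iff_of_nonneg (by positivity)).mpr (fun j => hYb Δt h0 h1 j)
    rw [hRdef]; nlinarith [norm_nonneg (fv yn), hCynn]
  -- ===== Phase E: Y - yn = O(Δt) =====
  set C2 := N * (8 * M * Sn / m) with hC2def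
  have hC2pos : 0 < C2 := by positivity
  have hYlin : ∀ Δt, 0 < Δt → Δt < δ3 → ∀ i, |Y Δt i - yn i| ≤ C2 * Δt := by
    intro Δt h0 h1 i
    have h1' : Δt < δ1 := lt_of_lt_of_le h1 hδ3δ1
    have h2' : Δt < δ2 := lt_of_lt_of_le h1 hδ3δ2
    have hΔT : Δt < T := lt_of_lt_of_le h1' hδ1T
    have heq := hY Δt h0 hΔT i
    have hsum : |∑ j, ((p i j yn + p i j (Y2 Δt)) * Y Δt j / Y2 Δt j
        - (d i j yn + d i j (Y2 Δt)) * Y Δt i / Y2 Δt i)| ≤ N * (16 * M * Sn / m) := by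
      refine (Finset.abs_sum_le_sum_abs _ _).trans ?_
      have hterm : ∀ j ∈ Finset.univ,
          |(p i j yn + p i j (Y2 Δt)) * Y Δt j / Y2 Δt j
            - (d i j yn + d i j (Y2 Δt)) * Y Δt i / Y2 Δt i| ≤ 16 * M * Sn / m := by
        intro j _
        have t1 : |(p i j yn + p i j (Y2 Δt)) * Y Δt j / Y2 Δt j|
            ≤ 2 * M * (2 * Sn) / (m / 2) :=
          abs_mul_div_le (hpd2M Δt h0 h1' i j).1 (hYb Δt h0 h1 j) hm2 (hY2low Δt h0 h2' j)
        have t2 : |(d i j yn + d i j (Y2 Δt)) * Y Δt i / Y2 Δt i|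
            ≤ 2 * M * (2 * Sn) / (m / 2) :=
          abs_mul_div_le (hpd2M Δt h0 h1' i j).2 (hYb Δt h0 h1 i) hm2 (hY2low Δt h0 h2' i)
        calc |(p i j yn + p i j (Y2 Δt)) * Y Δt j / Y2 Δt j
              - (d i j yn + d i j (Y2 Δt)) * Y Δt i / Y2 Δt i|
            ≤ |(p i j yn + p i j (Y2 Δt)) * Y Δt j / Y2 Δt j|
              + |(d i j yn + d i j (Y2 Δt)) * Y Δt i / Y2 Δt i| := abs_sub_le' _ _
          _ ≤ 2 * M * (2 * Sn) / (m / 2) + 2 * M * (2 * Sn) / (m / 2) := add_le_add t1 t2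
          _ = 16 * M * Sn / m := by field_simp; ring
      calc ∑ j, |(p i j yn + p i j (Y2 Δt)) * Y Δt j / Y2 Δt j
            - (d i j yn + d i j (Y2 Δt)) * Y Δt i / Y2 Δt i|
          ≤ ∑ _j : Fin N, (16 * M * Sn / m) := Finset.sum_le_sum hterm
        _ = N * (16 * M * Sn / m) := by
            rw [Finset.sum_const, Finset.card_univ, Fintype.card_fin, nsmul_eq_mul]
    have hdiff : Y Δt i - yn i = Δt / 2 * ∑ j, ((p i j yn + p i j (Y2 Δt)) * Y Δt j / Y2 Δt j
        - (d i j yn + d i j (Y2 Δt)) * Y Δt i / Y2 Δt i) := by linarith [heq]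
    rw [hdiff, abs_mul, abs_of_pos (by positivity : (0:ℝ) < Δt / 2)]
    calc Δt / 2 * |∑ j, ((p i j yn + p i j (Y2 Δt)) * Y Δt j / Y2 Δt j
          - (d i j yn + d i j (Y2 Δt)) * Y Δt i / Y2 Δt i)|
        ≤ Δt / 2 * (N * (16 * M * Sn / m)) := mul_le_mul_of_nonneg_left hsum (by positivity)
      _ = C2 * Δt := by rw [hC2def]; ring
  -- ===== Phase F: Y2 = yn + Δt f(yn) + O(Δt²) =====
  set C3 := N * (2 * M * C1 / m) with hC3def
  have hC3pos : 0 < C3 := by positivity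
  have hY2quad : ∀ Δt, 0 < Δt → Δt < δ1 → ∀ i,
      |Y2 Δt i - yn i - Δt * f i yn| ≤ C3 * Δt ^ 2 := by
    intro Δt h0 h1 i
    have hΔT : Δt < T := lt_of_lt_of_le h1 hδ1T
    have heq := hY2 Δt h0 hΔT i
    have hfyn : f i yn = ∑ j, (p i j yn - d i j yn) := by rw [hf]
    have e1 : Y2 Δt i - yn i - Δt * f i yn
        = Δt * ∑ j, (p i j yn * (Y2 Δt j - yn j) / yn j
            - d i j yn * (Y2 Δt i - yn i) / yn i) := by
      have h1' : Y2 Δt i - yn i = Δt * ∑ j, (p i j yn * Y2 Δt j / yn j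
          - d i j yn * Y2 Δt i / yn i) := by linarith [heq]
      have h2' : ∑ j, (p i j yn * Y2 Δt j / yn j - d i j yn * Y2 Δt i / yn i)
          - ∑ j, (p i j yn - d i j yn)
          = ∑ j, (p i j yn * (Y2 Δt j - yn j) / yn j
            - d i j yn * (Y2 Δt i - yn i) / yn i) := by
        rw [← Finset.sum_sub_distrib]
        refine Finset.sum_congr rfl fun j _ => ?_
        have hj : yn j ≠ 0 := ne_of_gt (hynpos j)
        have hi : yn i ≠ 0 := ne_of_gt (hynpos i)
        field_simp
        ring
      calc Y2 Δt i - yn i - Δt * f i yn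
          = Δt * (∑ j, (p i j yn * Y2 Δt j / yn j - d i j yn * Y2 Δt i / yn i)
            - ∑ j, (p i j yn - d i j yn)) := by rw [hfyn]; rw [h1']; ring
        _ = Δt * ∑ j, (p i j yn * (Y2 Δt j - yn j) / yn j
            - d i j yn * (Y2 Δt i - yn i) / yn i) := by rw [h2']
    rw [e1, abs_mul, abs_of_pos h0]
    have hsum : |∑ j, (p i j yn * (Y2 Δt j - yn j) / yn j
        - d i j yn * (Y2 Δt i - yn i) / yn i)| ≤ N * (2 * M * C1 / m) * Δt := by
      refine (Finset.abs_sum_le_sum_abs _ _).trans ?_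
      have hterm : ∀ j ∈ Finset.univ,
          |p i j yn * (Y2 Δt j - yn j) / yn j - d i j yn * (Y2 Δt i - yn i) / yn i|
          ≤ 2 * M * C1 / m * Δt := by
        intro j _
        have t1 : |p i j yn * (Y2 Δt j - yn j) / yn j| ≤ M * (C1 * Δt) / m :=
          abs_mul_div_le (hMb yn hynK i j).1 (hY2lin Δt h0 h1 j) hm (hmle j)
        have t2 : |d i j yn * (Y2 Δt i - yn i) / yn i| ≤ M * (C1 * Δt) / m :=
          abs_mul_div_le (hMb yn hynK i j).2 (hY2lin Δt h0 h1 i) hm (hmle i)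
        calc |p i j yn * (Y2 Δt j - yn j) / yn j - d i j yn * (Y2 Δt i - yn i) / yn i|
            ≤ |p i j yn * (Y2 Δt j - yn j) / yn j|
              + |d i j yn * (Y2 Δt i - yn i) / yn i| := abs_sub_le' _ _
          _ ≤ M * (C1 * Δt) / m + M * (C1 * Δt) / m := add_le_add t1 t2
          _ = 2 * M * C1 / m * Δt := by field_simp; ring
      calc ∑ j, |p i j yn * (Y2 Δt j - yn j) / yn j - d i j yn * (Y2 Δt i - yn i) / yn i|
          ≤ ∑ _j : Fin N, (2 * M * C1 / m * Δt) := Finset.sum_le_sum hterm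
        _ = N * (2 * M * C1 / m) * Δt := by
            rw [Finset.sum_const, Finset.card_univ, Fintype.card_fin, nsmul_eq_mul]; ring
    calc Δt * |∑ j, (p i j yn * (Y2 Δt j - yn j) / yn j
          - d i j yn * (Y2 Δt i - yn i) / yn i)|
        ≤ Δt * (N * (2 * M * C1 / m) * Δt) := mul_le_mul_of_nonneg_left hsum h0.le
      _ = C3 * Δt ^ 2 := by rw [hC3def]; ring
  -- ===== Phase G: Y = yn + Δt f(yn) + O(Δt²) =====
  set C4 := N / 2 * (2 * (4 * M * (C1 + C2) / m + L * C1)) with hC4def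
  have hC4pos : 0 < C4 := by positivity
  have hnY2yn : ∀ Δt, 0 < Δt → Δt < δ1 → ‖Y2 Δt - yn‖ ≤ C1 * Δt := by
    intro Δt h0 h1
    refine (pi_norm_le_iff_of_nonneg (by positivity)).mpr fun j => ?_
    simpa using hY2lin Δt h0 h1 j
  have hYquad : ∀ Δt, 0 < Δt → Δt < δ3 → ∀ i,
      |Y Δt i - yn i - Δt * f i yn| ≤ C4 * Δt ^ 2 := by
    intro Δt h0 h1 i
    have h1' : Δt < δ1 := lt_of_lt_of_le h1 hδ3δ1
    have h2' : Δt < δ2 := lt_of_lt_of_le h1 hδ3δ2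
    have hΔT : Δt < T := lt_of_lt_of_le h1' hδ1T
    have heq := hY Δt h0 hΔT i
    have hfyn : f i yn = ∑ j, (p i j yn - d i j yn) := by rw [hf]
    have hYY2 : ∀ k, |Y Δt k - Y2 Δt k| ≤ (C1 + C2) * Δt := by
      intro k
      have a1 := hY2lin Δt h0 h1' k
      have a2 := hYlin Δt h0 h1 k
      calc |Y Δt k - Y2 Δt k| = |(Y Δt k - yn k) - (Y2 Δt k - yn k)| := by ring_nf
        _ ≤ |Y Δt k - yn k| + |Y2 Δt k - yn k| := abs_sub_le' _ _
        _ ≤ (C1 + C2) * Δt := by linarith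
    have h1'' : Y Δt i - yn i = Δt / 2 * ∑ j, ((p i j yn + p i j (Y2 Δt)) * Y Δt j / Y2 Δt j
        - (d i j yn + d i j (Y2 Δt)) * Y Δt i / Y2 Δt i) := by linarith [heq]
    have h2'' : ∑ j, ((p i j yn + p i j (Y2 Δt)) * Y Δt j / Y2 Δt j
          - (d i j yn + d i j (Y2 Δt)) * Y Δt i / Y2 Δt i)
        - ∑ j, (2 * (p i j yn - d i j yn))
        = ∑ j, ((p i j yn + p i j (Y2 Δt)) * (Y Δt j - Y2 Δt j) / Y2 Δt j
          + (p i j (Y2 Δt) - p i j yn)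
          - ((d i j yn + d i j (Y2 Δt)) * (Y Δt i - Y2 Δt i) / Y2 Δt i
            + (d i j (Y2 Δt) - d i j yn))) := by
      rw [← Finset.sum_sub_distrib]
      refine Finset.sum_congr rfl fun j _ => ?_
      have hj : Y2 Δt j ≠ 0 := ne_of_gt (lt_of_lt_of_le hm2 (hY2low Δt h0 h2' j))
      have hi : Y2 Δt i ≠ 0 := ne_of_gt (lt_of_lt_of_le hm2 (hY2low Δt h0 h2' i))
      field_simp
      ring
    have h3'' : Δt * f i yn = Δt / 2 * ∑ j, (2 * (p i j yn - d i j yn)) := by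
      rw [hfyn, Finset.mul_sum, Finset.mul_sum]
      refine Finset.sum_congr rfl fun j _ => by ring
    have e1 : Y Δt i - yn i - Δt * f i yn
        = Δt / 2 * ∑ j, ((p i j yn + p i j (Y2 Δt)) * (Y Δt j - Y2 Δt j) / Y2 Δt j
          + (p i j (Y2 Δt) - p i j yn)
          - ((d i j yn + d i j (Y2 Δt)) * (Y Δt i - Y2 Δt i) / Y2 Δt i
            + (d i j (Y2 Δt) - d i j yn))) := by
      rw [h1'', h3'', ← mul_sub, h2'']
    have hplip : ∀ j, |p i j (Y2 Δt) - p i j yn| ≤ L * (C1 * Δt) := by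
      intro j
      calc |p i j (Y2 Δt) - p i j yn| ≤ L * ‖Y2 Δt - yn‖ :=
            hpLip i j (Y2 Δt) (hY2K Δt h0 h1') yn hynK
        _ ≤ L * (C1 * Δt) := mul_le_mul_of_nonneg_left (hnY2yn Δt h0 h1') hLpos.le
    have hdlip : ∀ j, |d i j (Y2 Δt) - d i j yn| ≤ L * (C1 * Δt) := by
      intro j
      calc |d i j (Y2 Δt) - d i j yn| ≤ L * ‖Y2 Δt - yn‖ :=
            hdLip i j (Y2 Δt) (hY2K Δt h0 h1') yn hynK
        _ ≤ L * (C1 * Δt) := mul_le_mul_of_nonneg_left (hnY2yn Δt h0 h1') hLpos.le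
    have hsum : |∑ j, ((p i j yn + p i j (Y2 Δt)) * (Y Δt j - Y2 Δt j) / Y2 Δt j
          + (p i j (Y2 Δt) - p i j yn)
          - ((d i j yn + d i j (Y2 Δt)) * (Y Δt i - Y2 Δt i) / Y2 Δt i
            + (d i j (Y2 Δt) - d i j yn)))|
        ≤ N * (2 * (4 * M * (C1 + C2) / m + L * C1)) * Δt := by
      refine (Finset.abs_sum_le_sum_abs _ _).trans ?_
      have hterm : ∀ j ∈ Finset.univ,
          |(p i j yn + p i j (Y2 Δt)) * (Y Δt j - Y2 Δt j) / Y2 Δt j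
            + (p i j (Y2 Δt) - p i j yn)
            - ((d i j yn + d i j (Y2 Δt)) * (Y Δt i - Y2 Δt i) / Y2 Δt i
              + (d i j (Y2 Δt) - d i j yn))|
          ≤ 2 * (4 * M * (C1 + C2) / m + L * C1) * Δt := by
        intro j _
        have t1 : |(p i j yn + p i j (Y2 Δt)) * (Y Δt j - Y2 Δt j) / Y2 Δt j|
            ≤ 2 * M * ((C1 + C2) * Δt) / (m / 2) :=
          abs_mul_div_le (hpd2M Δt h0 h1' i j).1 (hYY2 j) hm2 (hY2low Δt h0 h2' j)
        have t3 : |(d i j yn + d i j (Y2 Δt)) * (Y Δt i - Y2 Δt i) / Y2 Δt i|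
            ≤ 2 * M * ((C1 + C2) * Δt) / (m / 2) :=
          abs_mul_div_le (hpd2M Δt h0 h1' i j).2 (hYY2 i) hm2 (hY2low Δt h0 h2' i)
        have t2 := hplip j
        have t4 := hdlip j
        have step : |(p i j yn + p i j (Y2 Δt)) * (Y Δt j - Y2 Δt j) / Y2 Δt j
            + (p i j (Y2 Δt) - p i j yn)
            - ((d i j yn + d i j (Y2 Δt)) * (Y Δt i - Y2 Δt i) / Y2 Δt i
              + (d i j (Y2 Δt) - d i j yn))|
            ≤ |(p i j yn + p i j (Y2 Δt)) * (Y Δt j - Y2 Δt j) / Y2 Δt j|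
              + |p i j (Y2 Δt) - p i j yn|
              + (|(d i j yn + d i j (Y2 Δt)) * (Y Δt i - Y2 Δt i) / Y2 Δt i|
                + |d i j (Y2 Δt) - d i j yn|) := by
          refine (abs_sub_le' _ _).trans ?_
          have u1 := abs_add_le ((p i j yn + p i j (Y2 Δt)) * (Y Δt j - Y2 Δt j) / Y2 Δt j)
            (p i j (Y2 Δt) - p i j yn)
          have u2 := abs_add_le ((d i j yn + d i j (Y2 Δt)) * (Y Δt i - Y2 Δt i) / Y2 Δt i)
            (d i j (Y2 Δt) - d i j yn)
          linarith
        refine step.trans ?_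
        have hq : 2 * M * ((C1 + C2) * Δt) / (m / 2) = 4 * M * (C1 + C2) / m * Δt := by
          field_simp; ring
        rw [hq] at t1 t3
        have hre : 2 * (4 * M * (C1 + C2) / m + L * C1) * Δt
            = 4 * M * (C1 + C2) / m * Δt + L * (C1 * Δt)
              + (4 * M * (C1 + C2) / m * Δt + L * (C1 * Δt)) := by ring
        rw [hre]
        exact add_le_add (add_le_add t1 t2) (add_le_add t3 t4)
      calc ∑ j, |(p i j yn + p i j (Y2 Δt)) * (Y Δt j - Y2 Δt j) / Y2 Δt j
            + (p i j (Y2 Δt) - p i j yn)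
            - ((d i j yn + d i j (Y2 Δt)) * (Y Δt i - Y2 Δt i) / Y2 Δt i
              + (d i j (Y2 Δt) - d i j yn))|
          ≤ ∑ _j : Fin N, (2 * (4 * M * (C1 + C2) / m + L * C1) * Δt) :=
            Finset.sum_le_sum hterm
        _ = N * (2 * (4 * M * (C1 + C2) / m + L * C1)) * Δt := by
            rw [Finset.sum_const, Finset.card_univ, Fintype.card_fin, nsmul_eq_mul]; ring
    rw [e1, abs_mul, abs_of_pos (by positivity : (0:ℝ) < Δt / 2)]
    calc Δt / 2 * |∑ j, ((p i j yn + p i j (Y2 Δt)) * (Y Δt j - Y2 Δt j) / Y2 Δt j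
          + (p i j (Y2 Δt) - p i j yn)
          - ((d i j yn + d i j (Y2 Δt)) * (Y Δt i - Y2 Δt i) / Y2 Δt i
            + (d i j (Y2 Δt) - d i j yn)))|
        ≤ Δt / 2 * (N * (2 * (4 * M * (C1 + C2) / m + L * C1)) * Δt) :=
          mul_le_mul_of_nonneg_left hsum (by positivity)
      _ = C4 * Δt ^ 2 := by rw [hC4def]; ring
  -- ===== Phase H: Y - Y2 = O(Δt²) =====
  have hYY2quad : ∀ Δt, 0 < Δt → Δt < δ3 → ∀ k,
      |Y Δt k - Y2 Δt k| ≤ (C3 + C4) * Δt ^ 2 := by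
    intro Δt h0 h1 k
    have a1 := hY2quad Δt h0 (lt_of_lt_of_le h1 hδ3δ1) k
    have a2 := hYquad Δt h0 h1 k
    calc |Y Δt k - Y2 Δt k|
        = |(Y Δt k - yn k - Δt * f k yn) - (Y2 Δt k - yn k - Δt * f k yn)| := by ring_nf
      _ ≤ |Y Δt k - yn k - Δt * f k yn| + |Y2 Δt k - yn k - Δt * f k yn| := abs_sub_le' _ _
      _ ≤ (C3 + C4) * Δt ^ 2 := by linarith
  -- ===== Phase I: Y = Heun + O(Δt³) =====
  set w : ℝ → Fin N → ℝ := fun Δt j => yn j + Δt * f j yn with hwdef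
  have hwK : ∀ Δt, 0 < Δt → Δt ≤ 1 → w Δt ∈ K := by
    intro Δt h0 h1
    refine hKmem _ ?_
    have hb : ‖w Δt‖ ≤ Sn + ‖fv yn‖ := by
      refine (pi_norm_le_iff_of_nonneg (by positivity)).mpr fun j => ?_
      have hfj : |f j yn| ≤ ‖fv yn‖ := by
        have := norm_le_pi_norm (fv yn) j
        simpa [hfv] using this
      have : |yn j + Δt * f j yn| ≤ |yn j| + Δt * |f j yn| := by
        refine (abs_add_le _ _).trans ?_
        rw [abs_mul, abs_of_pos h0]
      have h2 : Δt * |f j yn| ≤ |f j yn| := by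
        nlinarith [abs_nonneg (f j yn)]
      simp only [hwdef]
      calc |yn j + Δt * f j yn| ≤ |yn j| + Δt * |f j yn| := this
        _ ≤ Sn + ‖fv yn‖ := by linarith [hSn j, hfj]
    rw [hRdef]; nlinarith [hCynn, hSnpos]
  have hnY2w : ∀ Δt, 0 < Δt → Δt < δ1 → ‖Y2 Δt - w Δt‖ ≤ C3 * Δt ^ 2 := by
    intro Δt h0 h1
    refine (pi_norm_le_iff_of_nonneg (by positivity)).mpr fun j => ?_
    have := hY2quad Δt h0 h1 j
    have e : (Y2 Δt - w Δt) j = Y2 Δt j - yn j - Δt * f j yn := by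
      simp [hwdef]; ring
    rw [e]
    simpa using this
  set Heun : Fin N → ℝ → ℝ := fun i Δt => yn i + Δt / 2 * (f i yn + f i (w Δt)) with hHdef
  set δ4 := min δ3 1 with hδ4def
  have hδ4pos : 0 < δ4 := lt_min hδ3pos one_pos
  have hδ4δ3 : δ4 ≤ δ3 := min_le_left _ _
  set C6 := N / 2 * (2 * (4 * M * (C3 + C4) / m + L * C3)) with hC6def
  have hC6pos : 0 < C6 := by positivity
  have hYHeun : ∀ Δt, 0 < Δt → Δt < δ4 → ∀ i,
      |Y Δt i - Heun i Δt| ≤ C6 * Δt ^ 3 := by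
    intro Δt h0 h1 i
    have h3' : Δt < δ3 := lt_of_lt_of_le h1 hδ4δ3
    have h1' : Δt < δ1 := lt_of_lt_of_le h3' hδ3δ1
    have h2' : Δt < δ2 := lt_of_lt_of_le h3' hδ3δ2
    have hΔT : Δt < T := lt_of_lt_of_le h1' hδ1T
    have hΔ1 : Δt ≤ 1 := le_of_lt (lt_of_lt_of_le h1 (min_le_right _ _))
    have heq := hY Δt h0 hΔT i
    have hfyn : f i yn = ∑ j, (p i j yn - d i j yn) := by rw [hf]
    have hfw : f i (w Δt) = ∑ j, (p i j (w Δt) - d i j (w Δt)) := by rw [hf]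
    have h1'' : Y Δt i - yn i = Δt / 2 * ∑ j, ((p i j yn + p i j (Y2 Δt)) * Y Δt j / Y2 Δt j
        - (d i j yn + d i j (Y2 Δt)) * Y Δt i / Y2 Δt i) := by linarith [heq]
    have h2'' : ∑ j, ((p i j yn + p i j (Y2 Δt)) * Y Δt j / Y2 Δt j
          - (d i j yn + d i j (Y2 Δt)) * Y Δt i / Y2 Δt i)
        - ∑ j, ((p i j yn - d i j yn) + (p i j (w Δt) - d i j (w Δt)))
        = ∑ j, ((p i j yn + p i j (Y2 Δt)) * (Y Δt j - Y2 Δt j) / Y2 Δt j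
          + (p i j (Y2 Δt) - p i j (w Δt))
          - ((d i j yn + d i j (Y2 Δt)) * (Y Δt i - Y2 Δt i) / Y2 Δt i
            + (d i j (Y2 Δt) - d i j (w Δt)))) := by
      rw [← Finset.sum_sub_distrib]
      refine Finset.sum_congr rfl fun j _ => ?_
      have hj : Y2 Δt j ≠ 0 := ne_of_gt (lt_of_lt_of_le hm2 (hY2low Δt h0 h2' j))
      have hi : Y2 Δt i ≠ 0 := ne_of_gt (lt_of_lt_of_le hm2 (hY2low Δt h0 h2' i))
      field_simp
      ring
    have h3'' : Δt / 2 * (f i yn + f i (w Δt))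
        = Δt / 2 * ∑ j, ((p i j yn - d i j yn) + (p i j (w Δt) - d i j (w Δt))) := by
      rw [hfyn, hfw, ← Finset.sum_add_distrib]
    have e1 : Y Δt i - Heun i Δt
        = Δt / 2 * ∑ j, ((p i j yn + p i j (Y2 Δt)) * (Y Δt j - Y2 Δt j) / Y2 Δt j
          + (p i j (Y2 Δt) - p i j (w Δt))
          - ((d i j yn + d i j (Y2 Δt)) * (Y Δt i - Y2 Δt i) / Y2 Δt i
            + (d i j (Y2 Δt) - d i j (w Δt)))) := by
      have : Y Δt i - Heun i Δt = (Y Δt i - yn i) - Δt / 2 * (f i yn + f i (w Δt)) := by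
        rw [hHdef]; ring
      rw [this, h1'', h3'', ← mul_sub, h2'']
    have hplip : ∀ j, |p i j (Y2 Δt) - p i j (w Δt)| ≤ L * (C3 * Δt ^ 2) := by
      intro j
      calc |p i j (Y2 Δt) - p i j (w Δt)| ≤ L * ‖Y2 Δt - w Δt‖ :=
            hpLip i j (Y2 Δt) (hY2K Δt h0 h1') (w Δt) (hwK Δt h0 hΔ1)
        _ ≤ L * (C3 * Δt ^ 2) := mul_le_mul_of_nonneg_left (hnY2w Δt h0 h1') hLpos.le
    have hdlip : ∀ j, |d i j (Y2 Δt) - d i j (w Δt)| ≤ L * (C3 * Δt ^ 2) := by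
      intro j
      calc |d i j (Y2 Δt) - d i j (w Δt)| ≤ L * ‖Y2 Δt - w Δt‖ :=
            hdLip i j (Y2 Δt) (hY2K Δt h0 h1') (w Δt) (hwK Δt h0 hΔ1)
        _ ≤ L * (C3 * Δt ^ 2) := mul_le_mul_of_nonneg_left (hnY2w Δt h0 h1') hLpos.le
    have hsum : |∑ j, ((p i j yn + p i j (Y2 Δt)) * (Y Δt j - Y2 Δt j) / Y2 Δt j
          + (p i j (Y2 Δt) - p i j (w Δt))
          - ((d i j yn + d i j (Y2 Δt)) * (Y Δt i - Y2 Δt i) / Y2 Δt i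
            + (d i j (Y2 Δt) - d i j (w Δt))))|
        ≤ N * (2 * (4 * M * (C3 + C4) / m + L * C3)) * Δt ^ 2 := by
      refine (Finset.abs_sum_le_sum_abs _ _).trans ?_
      have hterm : ∀ j ∈ Finset.univ,
          |(p i j yn + p i j (Y2 Δt)) * (Y Δt j - Y2 Δt j) / Y2 Δt j
            + (p i j (Y2 Δt) - p i j (w Δt))
            - ((d i j yn + d i j (Y2 Δt)) * (Y Δt i - Y2 Δt i) / Y2 Δt i
              + (d i j (Y2 Δt) - d i j (w Δt)))|
          ≤ 2 * (4 * M * (C3 + C4) / m + L * C3) * Δt ^ 2 := by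
        intro j _
        have t1 : |(p i j yn + p i j (Y2 Δt)) * (Y Δt j - Y2 Δt j) / Y2 Δt j|
            ≤ 2 * M * ((C3 + C4) * Δt ^ 2) / (m / 2) :=
          abs_mul_div_le (hpd2M Δt h0 h1' i j).1 (hYY2quad Δt h0 h3' j) hm2
            (hY2low Δt h0 h2' j)
        have t3 : |(d i j yn + d i j (Y2 Δt)) * (Y Δt i - Y2 Δt i) / Y2 Δt i|
            ≤ 2 * M * ((C3 + C4) * Δt ^ 2) / (m / 2) :=
          abs_mul_div_le (hpd2M Δt h0 h1' i j).2 (hYY2quad Δt h0 h3' i) hm2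
            (hY2low Δt h0 h2' i)
        have t2 := hplip j
        have t4 := hdlip j
        have step : |(p i j yn + p i j (Y2 Δt)) * (Y Δt j - Y2 Δt j) / Y2 Δt j
            + (p i j (Y2 Δt) - p i j (w Δt))
            - ((d i j yn + d i j (Y2 Δt)) * (Y Δt i - Y2 Δt i) / Y2 Δt i
              + (d i j (Y2 Δt) - d i j (w Δt)))|
            ≤ |(p i j yn + p i j (Y2 Δt)) * (Y Δt j - Y2 Δt j) / Y2 Δt j|
              + |p i j (Y2 Δt) - p i j (w Δt)|
              + (|(d i j yn + d i j (Y2 Δt)) * (Y Δt i - Y2 Δt i) / Y2 Δt i|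
                + |d i j (Y2 Δt) - d i j (w Δt)|) := by
          refine (abs_sub_le' _ _).trans ?_
          have u1 := abs_add_le ((p i j yn + p i j (Y2 Δt)) * (Y Δt j - Y2 Δt j) / Y2 Δt j)
            (p i j (Y2 Δt) - p i j (w Δt))
          have u2 := abs_add_le ((d i j yn + d i j (Y2 Δt)) * (Y Δt i - Y2 Δt i) / Y2 Δt i)
            (d i j (Y2 Δt) - d i j (w Δt))
          linarith
        refine step.trans ?_
        have hq : 2 * M * ((C3 + C4) * Δt ^ 2) / (m / 2)
            = 4 * M * (C3 + C4) / m * Δt ^ 2 := by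
          field_simp; ring
        rw [hq] at t1 t3
        have hre : 2 * (4 * M * (C3 + C4) / m + L * C3) * Δt ^ 2
            = 4 * M * (C3 + C4) / m * Δt ^ 2 + L * (C3 * Δt ^ 2)
              + (4 * M * (C3 + C4) / m * Δt ^ 2 + L * (C3 * Δt ^ 2)) := by ring
        rw [hre]
        exact add_le_add (add_le_add t1 t2) (add_le_add t3 t4)
      calc ∑ j, |(p i j yn + p i j (Y2 Δt)) * (Y Δt j - Y2 Δt j) / Y2 Δt j
            + (p i j (Y2 Δt) - p i j (w Δt))
            - ((d i j yn + d i j (Y2 Δt)) * (Y Δt i - Y2 Δt i) / Y2 Δt i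
              + (d i j (Y2 Δt) - d i j (w Δt)))|
          ≤ ∑ _j : Fin N, (2 * (4 * M * (C3 + C4) / m + L * C3) * Δt ^ 2) :=
            Finset.sum_le_sum hterm
        _ = N * (2 * (4 * M * (C3 + C4) / m + L * C3)) * Δt ^ 2 := by
            rw [Finset.sum_const, Finset.card_univ, Fintype.card_fin, nsmul_eq_mul]; ring
    rw [e1, abs_mul, abs_of_pos (by positivity : (0:ℝ) < Δt / 2)]
    calc Δt / 2 * |∑ j, ((p i j yn + p i j (Y2 Δt)) * (Y Δt j - Y2 Δt j) / Y2 Δt j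
          + (p i j (Y2 Δt) - p i j (w Δt))
          - ((d i j yn + d i j (Y2 Δt)) * (Y Δt i - Y2 Δt i) / Y2 Δt i
            + (d i j (Y2 Δt) - d i j (w Δt))))|
        ≤ Δt / 2 * (N * (2 * (4 * M * (C3 + C4) / m + L * C3)) * Δt ^ 2) :=
          mul_le_mul_of_nonneg_left hsum (by positivity)
      _ = C6 * Δt ^ 3 := by rw [hC6def]; ring
  -- ===== Phase J: Heun vs exact solution =====
  set c := min T 1 with hcdef
  have hcpos : 0 < c := lt_min hT one_pos
  have hcT : c ≤ T := min_le_left _ _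
  have hc1 : c ≤ 1 := min_le_right _ _
  have hvK : ∀ z ∈ K, ‖fv z‖ ≤ 2 * N * M := by
    intro z hz
    refine (pi_norm_le_iff_of_nonneg (by positivity)).mpr fun j => ?_
    have : |f j z| ≤ ∑ k : Fin N, (2 * M) := by
      rw [hf]
      refine (Finset.abs_sum_le_sum_abs _ _).trans (Finset.sum_le_sum fun k _ => ?_)
      have h1 := (hMb z hz j k).1
      have h2 := (hMb z hz j k).2
      calc |p j k z - d j k z| ≤ |p j k z| + |d j k z| := abs_sub_le' _ _
        _ ≤ 2 * M := by linarith
    have h3 : ∑ _k : Fin N, (2 * M) = N * (2 * M) := by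
      rw [Finset.sum_const, Finset.card_univ, Fintype.card_fin, nsmul_eq_mul]
    calc ‖f j z‖ = |f j z| := rfl
      _ ≤ N * (2 * M) := by rw [h3] at this; exact this
      _ = 2 * N * M := by ring
  have hu : ∀ t ∈ Icc (0:ℝ) c, HasDerivWithinAt (fun s => y (tn + s))
      (fv (y (tn + t))) (Icc (0:ℝ) c) t := by
    intro t ht
    have hmem : tn + t ∈ Icc tn (tn + T) := ⟨by linarith [ht.1], by
      have := ht.2; have := hcT; linarith⟩
    refine hasDerivWithinAt_pi.mpr fun i => ?_
    have hcomp : HasDerivWithinAt (fun s : ℝ => tn + s) 1 (Icc (0:ℝ) c) t := by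
      simpa using (hasDerivWithinAt_id t (Icc (0:ℝ) c)).const_add tn
    have hmap : MapsTo (fun s : ℝ => tn + s) (Icc (0:ℝ) c) (Icc tn (tn + T)) := by
      intro s hs
      have h1 := hs.1
      have h2 : s ≤ T := hs.2.trans hcT
      simp only [Set.mem_Icc]
      constructor
      · linarith
      · linarith
    have hcmp := (hy' i (tn + t) hmem).comp t hcomp hmap
    have : HasDerivWithinAt (fun s => y (tn + s) i) (f i (y (tn + t)) * 1)
        (Icc (0:ℝ) c) t := hcmp
    simpa using this
  have huIccT : ∀ t ∈ Icc (0:ℝ) c, y (tn + t) ∈ K := by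
    intro t ht
    exact huK t ⟨ht.1, ht.2.trans hcT⟩
  have hulip : ∀ t ∈ Icc (0:ℝ) c, ‖y (tn + t) - y (tn + 0)‖ ≤ 2 * N * M * t := by
    intro t ht
    exact mvt0 hu (fun x hx => hvK _ (huIccT x hx)) ht
  -- now fix i and do the Taylor comparison
  intro i
  have hfdiff : Differentiable ℝ (f i) := (hfC2 i).differentiable (by norm_num)
  have hfd1 : ContDiff ℝ 1 (fderiv ℝ (f i)) := (hfC2 i).fderiv_right (by norm_num)
  -- Lipschitz constants for the derivative maps
  obtain ⟨LB, hLB0, hLB⟩ := lip_of_contDiff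
    (ContDiff.clm_apply hfd1 (hfvC2.of_le (by norm_num))) hKconv hKcomp
  obtain ⟨Lψ, hLψ0, hLψ⟩ := lip_of_contDiff
    (ContDiff.clm_apply hfd1 (contDiff_const (c := fv yn))) hKconv hKcomp
  -- derivative chain for g0(t) = y (tn+t) i
  have hg0 : ∀ t ∈ Icc (0:ℝ) c, HasDerivWithinAt (fun s => y (tn + s) i)
      (f i (y (tn + t))) (Icc (0:ℝ) c) t := by
    intro t ht
    have := hasDerivWithinAt_pi.mp (hu t ht) i
    simpa [hfv] using this
  have hg1 : ∀ t ∈ Icc (0:ℝ) c, HasDerivWithinAt (fun s => f i (y (tn + s)))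
      ((fderiv ℝ (f i) (y (tn + t))) (fv (y (tn + t)))) (Icc (0:ℝ) c) t := by
    intro t ht
    have hfda : HasFDerivAt (f i) (fderiv ℝ (f i) (y (tn + t))) (y (tn + t)) :=
      (hfdiff (y (tn + t))).hasFDerivAt
    have := hfda.comp_hasDerivWithinAt t (hu t ht)
    exact this
  have hg2lip : ∀ x ∈ Icc (0:ℝ) c,
      |(fderiv ℝ (f i) (y (tn + x))) (fv (y (tn + x)))
        - (fderiv ℝ (f i) (y (tn + 0))) (fv (y (tn + 0)))| ≤ (LB * (2 * N * M)) * x := by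
    intro x hx
    have h0c : (0:ℝ) ∈ Icc (0:ℝ) c := ⟨le_rfl, hcpos.le⟩
    have hb := hLB (y (tn + x)) (huIccT x hx) (y (tn + 0)) (huIccT 0 h0c)
    rw [Real.norm_eq_abs] at hb
    refine hb.trans ?_
    have := hulip x hx
    calc LB * ‖y (tn + x) - y (tn + 0)‖ ≤ LB * (2 * N * M * x) :=
          mul_le_mul_of_nonneg_left this hLB0
      _ = LB * (2 * N * M) * x := by ring
  have htay1 := taylor2_bound hg0 hg1 hg2lip (by positivity)
  -- the segment map and φ
  have hlφK : ∀ t ∈ Icc (0:ℝ) c, (yn + t • fv yn) ∈ K := by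
    intro t ht
    refine hKmem _ ?_
    have h5 : ‖yn + t • fv yn‖ ≤ Sn + ‖fv yn‖ := by
      rw [hSndef]
      calc ‖yn + t • fv yn‖ ≤ ‖yn‖ + ‖t • fv yn‖ := norm_add_le _ _
        _ ≤ ‖yn‖ + ‖fv yn‖ := by
            rw [norm_smul, Real.norm_eq_abs]
            have h3 : |t| ≤ 1 := by rw [abs_of_nonneg ht.1]; exact ht.2.trans hc1
            exact add_le_add_right (mul_le_of_le_one_left (norm_nonneg _) h3) _
    rw [hRdef]
    linarith [hCynn, hSnpos, h5]
  have hφ' : ∀ t ∈ Icc (0:ℝ) c, HasDerivWithinAt (fun s => f i (yn + s • fv yn))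
      ((fderiv ℝ (f i) (yn + t • fv yn)) (fv yn)) (Icc (0:ℝ) c) t := by
    intro t ht
    have hline : HasDerivWithinAt (fun s : ℝ => yn + s • fv yn) (fv yn) (Icc (0:ℝ) c) t := by
      have h1 : HasDerivAt (fun s : ℝ => s • fv yn) ((1:ℝ) • fv yn) t :=
        (hasDerivAt_id t).smul_const (fv yn)
      have h2 : HasDerivAt (fun s : ℝ => yn + s • fv yn) ((1:ℝ) • fv yn) t := h1.const_add yn
      simpa using h2.hasDerivWithinAt
    have hfda : HasFDerivAt (f i) (fderiv ℝ (f i) (yn + t • fv yn)) (yn + t • fv yn) :=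
      (hfdiff _).hasFDerivAt
    have := hfda.comp_hasDerivWithinAt t hline
    exact this
  have hφ'lip : ∀ x ∈ Icc (0:ℝ) c,
      |(fderiv ℝ (f i) (yn + x • fv yn)) (fv yn)
        - (fderiv ℝ (f i) (yn + (0:ℝ) • fv yn)) (fv yn)| ≤ (Lψ * ‖fv yn‖) * x := by
    intro x hx
    have h0c : (0:ℝ) ∈ Icc (0:ℝ) c := ⟨le_rfl, hcpos.le⟩
    have hb := hLψ (yn + x • fv yn) (hlφK x hx) (yn + (0:ℝ) • fv yn) (hlφK 0 h0c)
    rw [Real.norm_eq_abs] at hb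
    refine hb.trans ?_
    have he : (yn + x • fv yn) - (yn + (0:ℝ) • fv yn) = x • fv yn := by
      simp
    rw [he, norm_smul, Real.norm_eq_abs, abs_of_nonneg hx.1]
    calc Lψ * (x * ‖fv yn‖) = Lψ * ‖fv yn‖ * x := by ring
      _ ≤ Lψ * ‖fv yn‖ * x := le_rfl
  have htay2 := taylor1_bound (by positivity) hφ' hφ'lip
  -- put the Taylor results into usable form
  have hy0 : y (tn + 0) = yn := by rw [add_zero, hyn]
  have hφ0 : (fun s => f i (yn + s • fv yn)) 0 = f i yn := by simp
  have hl0 : yn + (0:ℝ) • fv yn = yn := by simp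
  set Cφ := Lψ * ‖fv yn‖ with hCφdef
  set CB := LB * (2 * N * M) with hCBdef
  set C7 := CB + Cφ / 2 with hC7def
  have hHeuny : ∀ t, 0 < t → t < c → |Heun i t - y (tn + t) i| ≤ C7 * t ^ 3 := by
    intro t h0 h1
    have htI : t ∈ Icc (0:ℝ) c := ⟨h0.le, h1.le⟩
    have ht1 := htay1 t htI
    have ht2 := htay2 t htI
    rw [hy0] at ht1
    rw [hl0] at ht2
    have hwt : w t = yn + t • fv yn := by
      funext j
      simp [hwdef, hfv]
    have hHe : Heun i t = yn i + t * f i yn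
        + t / 2 * (f i (yn + t • fv yn) - f i yn) := by
      simp only [hHdef]
      rw [hwt]
      ring
    have key : Heun i t - y (tn + t) i
        = t / 2 * (f i (yn + t • fv yn) - f i yn
            - t * (fderiv ℝ (f i) yn) (fv yn))
          - (y (tn + t) i - yn i - t * f i yn
            - t ^ 2 / 2 * (fderiv ℝ (f i) yn) (fv yn)) := by
      rw [hHe]; ring
    rw [key]
    have e2 : |f i (yn + t • fv yn) - f i yn - t * (fderiv ℝ (f i) yn) (fv yn)|
        ≤ Cφ * t ^ 2 := by
      have := ht2
      simpa using this
    have e1 : |y (tn + t) i - yn i - t * f i yn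
        - t ^ 2 / 2 * (fderiv ℝ (f i) yn) (fv yn)| ≤ CB * t ^ 3 := by
      have := ht1
      simpa using this
    have habs : |t / 2 * (f i (yn + t • fv yn) - f i yn
            - t * (fderiv ℝ (f i) yn) (fv yn))
          - (y (tn + t) i - yn i - t * f i yn
            - t ^ 2 / 2 * (fderiv ℝ (f i) yn) (fv yn))|
        ≤ t / 2 * (Cφ * t ^ 2) + CB * t ^ 3 := by
      refine (abs_sub_le' _ _).trans ?_
      have h5 : |t / 2 * (f i (yn + t • fv yn) - f i yn
          - t * (fderiv ℝ (f i) yn) (fv yn))| ≤ t / 2 * (Cφ * t ^ 2) := by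
        rw [abs_mul, abs_of_pos (by positivity : (0:ℝ) < t / 2)]
        exact mul_le_mul_of_nonneg_left e2 (by positivity)
      linarith [e1]
    refine habs.trans ?_
    exact le_of_eq (by rw [hC7def]; ring)
  -- ===== Final assembly =====
  refine ⟨C6 + C7 + 1, by positivity, min δ4 c, lt_min hδ4pos hcpos, ?_⟩
  intro t h0 h1
  have h1a : t < δ4 := lt_of_lt_of_le h1 (min_le_left _ _)
  have h1b : t < c := lt_of_lt_of_le h1 (min_le_right _ _)
  have a1 := hYHeun t h0 h1a i
  have a2 := hHeuny t h0 h1b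
  have hC7nn : 0 ≤ C7 := by positivity
  calc |Y t i - y (tn + t) i|
      = |(Y t i - Heun i t) + (Heun i t - y (tn + t) i)| := by ring_nf
    _ ≤ |Y t i - Heun i t| + |Heun i t - y (tn + t) i| := abs_add_le _ _
    _ ≤ C6 * t ^ 3 + C7 * t ^ 3 := add_le_add a1 a2
    _ = (C6 + C7) * t ^ 3 := by ring
    _ ≤ (C6 + C7 + 1) * t ^ 3 :=
        mul_le_mul_of_nonneg_right (by linarith only [] : C6 + C7 ≤ C6 + C7 + 1)
          (by positivity)
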